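/- Suppose n ≤ q-1 is even and A = {a_1,…,a_n} ⊆ F_q^* satisfies η(-a_i·δ_A(a_i)) = 1 for all i and η(-∏_{i=1}^n a_i) = 1. Then there exists a q-ary MDS Euclidean self-dual code of length n+2. -/

import Mathlib

open Finset

variable {F : Type*} [Field F]

/-- `δ_A(aᵢ)` for a listed set `a : Fin n → F`. -/
noncomputable def delta {n : ℕ} (a : Fin n → F) (i : Fin n) : F :=
  ∏ j ∈ Finset.univ.erase i, (a i - a j)

/-- `δ_S(x)` for a finite set `S ⊆ F`. -/
noncomputable def deltaSet [DecidableEq F] (S : Finset F) (x : F) : F :=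
  ∏ y ∈ S.erase x, (x - y)

/-- Euclidean dual of a linear code. -/
def dualCode {n : ℕ} (C : Submodule F (Fin n → F)) : Submodule F (Fin n → F) where
  carrier := {x | ∀ y ∈ C, ∑ i, x i * y i = 0}
  add_mem' := by
    intro x y hx hy z hz
    simp [add_mul, Finset.sum_add_distrib, hx z hz, hy z hz]
  zero_mem' := by intro y hy; simp
  smul_mem' := by
    intro c x hx y hy
    simp [smul_eq_mul, mul_assoc, ← Finset.mul_sum, hx y hy]

/-- Hamming weight. -/
noncomputable def wt {n : ℕ} (c : Fin n → F) : ℕ := Nat.card {i // c i ≠ 0}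

/-- `C` is an `[n, k, n-k+1]` MDS code. -/
noncomputable def IsMDSCode {n : ℕ} (C : Submodule F (Fin n → F)) (k : ℕ) : Prop :=
  Module.finrank F C = k ∧ ∀ c ∈ C, c ≠ 0 → n - k + 1 ≤ wt c

noncomputable def GRSmap {n : ℕ} (a v : Fin n → F) : Polynomial F →ₗ[F] (Fin n → F) where
  toFun f := fun i => v i * Polynomial.eval (a i) f
  map_add' f g := by funext i; simp [mul_add]
  map_smul' c f := by funext i; simp [Polynomial.eval_smul]; ring

/-- Generalized Reed–Solomon code `GRS_k(A, v)`. -/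
noncomputable def GRS {n : ℕ} (k : ℕ) (a v : Fin n → F) : Submodule F (Fin n → F) :=
  Submodule.map (GRSmap a v) (Polynomial.degreeLT F k)

noncomputable def GRSextMap {n : ℕ} (k : ℕ) (a v : Fin n → F) :
    Polynomial F →ₗ[F] (Fin (n+1) → F) where
  toFun f := fun i =>
    if h : (i : ℕ) < n then v ⟨i, h⟩ * Polynomial.eval (a ⟨i, h⟩) f else f.coeff (k - 1)
  map_add' f g := by
    funext i
    by_cases h : (i : ℕ) < n <;> simp [h, mul_add]
  map_smul' c f := by
    funext i
    by_cases h : (i : ℕ) < n <;> simp [h, Polynomial.eval_smul] <;> ring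

/-- Extended generalized Reed–Solomon code `GRS_k(A ∪ {∞}, v)`. -/
noncomputable def GRSext {n : ℕ} (k : ℕ) (a v : Fin n → F) : Submodule F (Fin (n+1) → F) :=
  Submodule.map (GRSextMap k a v) (Polynomial.degreeLT F k)

section Aux

open Polynomial

/-- Top coefficient via Lagrange interpolation. -/
lemma lagrange_top_coeff {m : ℕ} (b : Fin (m + 1) → F) (hb : Function.Injective b)
    (f : F[X]) (hf : f.degree < (m + 1 : ℕ)) :
    f.coeff m = ∑ i, f.eval (b i) * ∏ j ∈ Finset.univ.erase i, (b i - b j)⁻¹ := by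
  classical
  have hinj : Set.InjOn b ↑(Finset.univ : Finset (Fin (m + 1))) := fun x _ y _ h => hb h
  have hcard : #(Finset.univ : Finset (Fin (m + 1))) = m + 1 := by simp
  have hF : f = Lagrange.interpolate Finset.univ b fun i => f.eval (b i) :=
    Lagrange.eq_interpolate hinj (by rwa [hcard])
  conv_lhs => rw [hF]
  rw [Lagrange.interpolate_apply, Polynomial.finset_sum_coeff]
  refine Finset.sum_congr rfl fun i _ => ?_
  rw [Lagrange.basis_eq_prod_sub_inv_mul_nodal_div (Finset.mem_univ i),
    ← Lagrange.nodal_erase_eq_nodal_div (Finset.mem_univ i), ← mul_assoc, ← Polynomial.C_mul,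
    Polynomial.coeff_C_mul]
  have hdeg : (Lagrange.nodal (Finset.univ.erase i) b).natDegree = m := by
    rw [Lagrange.natDegree_nodal, Finset.card_erase_of_mem (Finset.mem_univ i), hcard]
    omega
  have hmon := Lagrange.nodal_monic (s := Finset.univ.erase i) (v := b)
  have : (Lagrange.nodal (Finset.univ.erase i) b).coeff m = 1 := by
    have h := hmon.coeff_natDegree
    rwa [hdeg] at h
  rw [this, mul_one, Lagrange.nodalWeight]

/-- Middle coefficient of a product of two polynomials of degree `< K + 1`. -/
lemma coeff_mul_mid (K : ℕ) (f g : F[X]) (hf : f.degree < (K + 1 : ℕ))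
    (hg : g.degree < (K + 1 : ℕ)) :
    (f * g).coeff (K + K) = f.coeff K * g.coeff K := by
  rw [Polynomial.coeff_mul, Finset.sum_eq_single (K, K)]
  · intro p hp hne
    rw [Finset.HasAntidiagonal.mem_antidiagonal] at hp
    rcases Nat.lt_or_ge p.1 K with h | h
    · have h2 : K + 1 ≤ p.2 := by omega
      have : g.coeff p.2 = 0 :=
        Polynomial.coeff_eq_zero_of_degree_lt (hg.trans_le (by exact_mod_cast h2))
      simp [this]
    · have h1 : K + 1 ≤ p.1 := by
        rcases Nat.eq_or_lt_of_le h with h' | h'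
        · exfalso
          exact hne (Prod.ext h'.symm (by omega))
        · omega
      have : f.coeff p.1 = 0 :=
        Polynomial.coeff_eq_zero_of_degree_lt (hf.trans_le (by exact_mod_cast h1))
      simp [this]
  · intro h
    simp at h

/-- The standard dot product bilinear form. -/
noncomputable def dotForm (m : ℕ) : LinearMap.BilinForm F (Fin m → F) :=
  LinearMap.mk₂ F (fun x y => ∑ i, x i * y i)
    (fun x x' y => by simp [add_mul, Finset.sum_add_distrib])
    (fun c x y => by simp [Finset.mul_sum, mul_assoc])
    (fun x y y' => by simp [mul_add, Finset.sum_add_distrib])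
    (fun c x y => by simp [Finset.mul_sum, mul_left_comm])

lemma dotForm_apply {m : ℕ} (x y : Fin m → F) : dotForm m x y = ∑ i, x i * y i := rfl

lemma dotForm_comm {m : ℕ} (x y : Fin m → F) : dotForm m x y = dotForm m y x := by
  rw [dotForm_apply, dotForm_apply]
  exact Finset.sum_congr rfl fun i _ => mul_comm _ _

lemma dotForm_refl (m : ℕ) : (dotForm (F := F) m).IsRefl := by
  intro x y h
  rw [show ((dotForm m) y) x = dotForm m y x from rfl, dotForm_comm]
  exact h

lemma dotForm_nondegenerate (m : ℕ) : (dotForm (F := F) m).Nondegenerate := by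
  have hL : ∀ x : Fin m → F, (∀ y, dotForm m x y = 0) → x = 0 := by
    intro x hx
    funext i
    have := hx (Pi.single i 1)
    rw [dotForm_apply] at this
    classical
    simpa [Pi.single_apply, mul_ite, Finset.sum_ite_eq'] using this
  refine ⟨hL, fun y hy => hL y fun x => ?_⟩
  rw [dotForm_comm]
  exact hy x

lemma dualCode_eq_orthogonal {m : ℕ} (C : Submodule F (Fin m → F)) :
    dualCode C = (dotForm m).orthogonal C := by
  ext x
  constructor
  · intro hx y hy
    have := hx y hy
    rwa [show ((dotForm m) y) x = dotForm m y x from rfl,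
      dotForm_comm, dotForm_apply]
  · intro hx y hy
    have := hx y hy
    rwa [show ((dotForm m) y) x = dotForm m y x from rfl,
      dotForm_comm, dotForm_apply] at this

lemma finrank_dualCode {m : ℕ} (C : Submodule F (Fin m → F)) :
    Module.finrank F (dualCode C) = m - Module.finrank F C := by
  rw [dualCode_eq_orthogonal,
    LinearMap.BilinForm.finrank_orthogonal (dotForm_nondegenerate m) C,
    Module.finrank_fin_fun]

lemma wt_eq {m : ℕ} (c : Fin m → F) [DecidableEq F] :
    wt c = #(Finset.univ.filter fun i => c i ≠ 0) := by
  rw [wt, Nat.card_eq_fintype_card, Fintype.card_subtype]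

lemma erase_univ_castSucc {N : ℕ} (i : Fin N) :
    (Finset.univ : Finset (Fin (N + 1))).erase (Fin.castSucc i) =
      insert (Fin.last N)
        ((Finset.univ.erase i).map ⟨Fin.castSucc, Fin.castSucc_injective N⟩) := by
  ext x
  refine Fin.lastCases ?_ (fun j => ?_) x
  · simp [(Fin.castSucc_lt_last i).ne']
  · simp [Fin.castSucc_inj, (Fin.castSucc_lt_last j).ne, eq_comm]

lemma erase_univ_last {N : ℕ} :
    (Finset.univ : Finset (Fin (N + 1))).erase (Fin.last N) =
      Finset.univ.map ⟨Fin.castSucc, Fin.castSucc_injective N⟩ := by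
  ext x
  refine Fin.lastCases ?_ (fun j => ?_) x
  · simp [(Fin.castSucc_lt_last · |>.ne)]
  · simp [(Fin.castSucc_lt_last j).ne]

lemma GRSextMap_castSucc {n k : ℕ} (a v : Fin n → F) (f : F[X]) (j : Fin n) :
    GRSextMap k a v f (Fin.castSucc j) = v j * f.eval (a j) := by
  simp only [GRSextMap, LinearMap.coe_mk, AddHom.coe_mk]
  rw [dif_pos (show ((Fin.castSucc j : Fin (n + 1)) : ℕ) < n by simpa using j.isLt)]
  congr 1

lemma GRSextMap_last {n k : ℕ} (a v : Fin n → F) (f : F[X]) :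
    GRSextMap k a v f (Fin.last n) = f.coeff (k - 1) := by
  simp only [GRSextMap, LinearMap.coe_mk, AddHom.coe_mk]
  rw [dif_neg (by simp)]

end Aux

/-- Corollary 1: if `n ≤ q - 1` is even, `A ⊆ F_q^*`, `η(-aᵢ δ_A(aᵢ)) = 1` for all `i` and
`η(-∏ aᵢ) = 1`, then there exists a `q`-ary MDS Euclidean self-dual code of length `n + 2`. -/
theorem stmt4 {F : Type*} [Field F] [Fintype F] (hodd : Odd (Fintype.card F))
    {n : ℕ} (hn : Even n) (hle : n ≤ Fintype.card F - 1)
    (a : Fin n ↪ F) (h0 : ∀ i, a i ≠ 0)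
    (h1 : ∀ i, IsSquare (-(a i * delta ⇑a i)))
    (h2 : IsSquare (-∏ i, a i)) :
    ∃ C : Submodule F (Fin (n + 2) → F), IsMDSCode C ((n + 2) / 2) ∧ C = dualCode C := by
  classical
  obtain ⟨m, rfl⟩ := hn
  -- evaluation points: A ∪ {0}
  set b : Fin (m + m + 1) → F := Fin.snoc ⇑a 0 with hbdef
  have hbcast : ∀ j : Fin (m + m), b (Fin.castSucc j) = a j := fun j => Fin.snoc_castSucc _ _ _
  have hblast : b (Fin.last (m + m)) = 0 := Fin.snoc_last _ _
  have hb : Function.Injective b := by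
    intro x y hxy
    rcases Fin.eq_castSucc_or_eq_last x with ⟨x', rfl⟩ | rfl <;>
      rcases Fin.eq_castSucc_or_eq_last y with ⟨y', rfl⟩ | rfl
    · rw [hbcast, hbcast] at hxy
      exact congrArg _ (a.injective hxy)
    · rw [hbcast, hblast] at hxy
      exact absurd hxy (h0 x')
    · rw [hblast, hbcast] at hxy
      exact absurd hxy.symm (h0 y')
    · rfl
  set d : Fin (m + m + 1) → F := fun i => ∏ j ∈ Finset.univ.erase i, (b i - b j) with hddef
  have hdcast : ∀ i : Fin (m + m), d (Fin.castSucc i) = a i * delta ⇑a i := by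
    intro i
    show (∏ j ∈ Finset.univ.erase (Fin.castSucc i), (b (Fin.castSucc i) - b j)) = _
    rw [erase_univ_castSucc, Finset.prod_insert (by simp [(Fin.castSucc_lt_last · |>.ne)]),
      Finset.prod_map]
    simp only [Function.Embedding.coeFn_mk, hbcast, hblast, sub_zero]
    rw [delta]
  have hdlast : d (Fin.last (m + m)) = ∏ i, a i := by
    show (∏ j ∈ Finset.univ.erase (Fin.last (m + m)), (b (Fin.last (m + m)) - b j)) = _
    rw [erase_univ_last, Finset.prod_map]
    simp only [Function.Embedding.coeFn_mk, hbcast, hblast, zero_sub]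
    have : ∀ j : Fin (m + m), -a j = (-1) * a j := fun j => by ring
    rw [Finset.prod_congr rfl fun j _ => this j, Finset.prod_mul_distrib,
      Finset.prod_const, Finset.card_univ, Fintype.card_fin, Even.neg_one_pow ⟨m, rfl⟩, one_mul]
  have hdne : ∀ i, d i ≠ 0 := by
    intro i
    refine Finset.prod_ne_zero_iff.mpr fun j hj => ?_
    exact sub_ne_zero_of_ne fun h => (Finset.mem_erase.mp hj).1 (hb h.symm)
  have hsq : ∀ i : Fin (m + m + 1), ∃ r : F, -(d i) = r * r := by
    intro i
    rcases Fin.eq_castSucc_or_eq_last i with ⟨j, rfl⟩ | rfl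
    · rw [hdcast]
      exact h1 j
    · rw [hdlast]
      exact h2
  choose w hw using hsq
  have hwne : ∀ i, w i ≠ 0 := by
    intro i h
    apply hdne i
    have h2 := hw i
    rw [h, mul_zero] at h2
    exact neg_eq_zero.mp h2
  set v : Fin (m + m + 1) → F := fun i => (w i)⁻¹ with hvdef
  have hvne : ∀ i, v i ≠ 0 := fun i => inv_ne_zero (hwne i)
  have hvv : ∀ i, v i * v i = -(d i)⁻¹ := by
    intro i
    calc (w i)⁻¹ * (w i)⁻¹ = (w i * w i)⁻¹ := (mul_inv _ _).symm
    _ = (-(d i))⁻¹ := by rw [← hw i]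
    _ = -(d i)⁻¹ := by rw [inv_neg]
  -- self-orthogonality
  have horth : GRSext (n := m + m + 1) (m + 1) b v ≤ dualCode (GRSext (m + 1) b v) := by
    rintro x ⟨f, hf, rfl⟩ y ⟨g, hg, rfl⟩
    rw [SetLike.mem_coe, Polynomial.mem_degreeLT] at hf hg
    have hfg : (f * g).degree < ((m + m + 1 : ℕ) : WithBot ℕ) := by
      rcases eq_or_ne f 0 with rfl | hf0
      · rw [zero_mul, Polynomial.degree_zero]
        exact WithBot.bot_lt_coe _
      rcases eq_or_ne g 0 with rfl | hg0
      · rw [mul_zero, Polynomial.degree_zero]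
        exact WithBot.bot_lt_coe _
      rw [← Polynomial.natDegree_lt_iff_degree_lt (mul_ne_zero hf0 hg0),
        Polynomial.natDegree_mul hf0 hg0]
      have h1' := (Polynomial.natDegree_lt_iff_degree_lt hf0).mpr hf
      have h2' := (Polynomial.natDegree_lt_iff_degree_lt hg0).mpr hg
      omega
    have hlag := lagrange_top_coeff b hb (f * g) hfg
    have hmid := coeff_mul_mid m f g hf hg
    have hterm : ∀ j : Fin (m + m + 1),
        GRSextMap (m + 1) b v f (Fin.castSucc j) * GRSextMap (m + 1) b v g (Fin.castSucc j) =
          -((f * g).eval (b j) * ∏ l ∈ Finset.univ.erase j, (b j - b l)⁻¹) := by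
      intro j
      rw [GRSextMap_castSucc, GRSextMap_castSucc, Polynomial.eval_mul,
        Finset.prod_inv_distrib]
      calc v j * Polynomial.eval (b j) f * (v j * Polynomial.eval (b j) g)
          = (v j * v j) * (Polynomial.eval (b j) f * Polynomial.eval (b j) g) := by ring
        _ = -(d j)⁻¹ * (Polynomial.eval (b j) f * Polynomial.eval (b j) g) := by rw [hvv j]
        _ = -(Polynomial.eval (b j) f * Polynomial.eval (b j) g *
              (∏ l ∈ Finset.univ.erase j, (b j - b l))⁻¹) := by rw [hddef]; ring
    show (∑ i : Fin (m + m + 1 + 1), _) = (0 : F)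
    rw [Fin.sum_univ_castSucc, Finset.sum_congr rfl fun j _ => hterm j, GRSextMap_last,
      GRSextMap_last, Finset.sum_neg_distrib, ← hlag, hmid]
    simp
  -- dimension
  have hfdlt : FiniteDimensional F (Polynomial.degreeLT F (m + 1)) :=
    Module.Finite.equiv (Polynomial.degreeLTEquiv F (m + 1)).symm
  have hrank : Module.finrank F (GRSext (n := m + m + 1) (m + 1) b v) = m + 1 := by
    have hker : Function.Injective
        ((GRSextMap (m + 1) b v).domRestrict (Polynomial.degreeLT F (m + 1))) := by
      rw [← LinearMap.ker_eq_bot, Submodule.eq_bot_iff]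
      rintro ⟨f, hf⟩ hf0
      rw [LinearMap.mem_ker, LinearMap.domRestrict_apply] at hf0
      rw [Submodule.mk_eq_zero]
      rcases eq_or_ne f 0 with rfl | hfne
      · rfl
      exfalso
      apply hfne
      have heval : ∀ j : Fin (m + m + 1), f.eval (b j) = 0 := by
        intro j
        have := congrFun hf0 (Fin.castSucc j)
        rw [GRSextMap_castSucc] at this
        rcases mul_eq_zero.mp this with h | h
        · exact absurd h (hvne j)
        · exact h
      refine Polynomial.eq_zero_of_natDegree_lt_card_of_eval_eq_zero f hb heval ?_
      have := (Polynomial.natDegree_lt_iff_degree_lt hfne).mpr (Polynomial.mem_degreeLT.mp hf)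
      rw [Fintype.card_fin]
      omega
    have hre : GRSext (n := m + m + 1) (m + 1) b v =
        LinearMap.range ((GRSextMap (m + 1) b v).domRestrict (Polynomial.degreeLT F (m + 1))) := by
      rw [LinearMap.range_domRestrict]
      rfl
    rw [hre, LinearMap.finrank_range_of_inj hker,
      (Polynomial.degreeLTEquiv F (m + 1)).finrank_eq, Module.finrank_fin_fun]
  have hdualrank : Module.finrank F (dualCode (GRSext (n := m + m + 1) (m + 1) b v)) = m + 1 := by
    rw [show dualCode (GRSext (n := m + m + 1) (m + 1) b v) =
        dualCode (n := m + m + 2) (GRSext (m + 1) b v) from rfl,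
      finrank_dualCode, hrank]
    omega
  have hdual : GRSext (n := m + m + 1) (m + 1) b v =
      dualCode (GRSext (n := m + m + 1) (m + 1) b v) := by
    refine Submodule.eq_of_le_of_finrank_le horth ?_
    rw [hdualrank, hrank]
  refine ⟨GRSext (m + 1) b v, ⟨?_, ?_⟩, hdual⟩
  · rw [hrank]
    omega
  · -- MDS distance
    rintro c ⟨f, hfmem, rfl⟩ hcne
    rw [SetLike.mem_coe, Polynomial.mem_degreeLT] at hfmem
    have hf0 : f ≠ 0 := by
      rintro rfl
      exact hcne (map_zero _)
    have hnat : f.natDegree ≤ m := by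
      have := (Polynomial.natDegree_lt_iff_degree_lt hf0).mpr hfmem
      omega
    have hwt : wt ((GRSextMap (m + 1) b v) f) +
        #(Finset.univ.filter fun i => (GRSextMap (m + 1) b v) f i = 0) = m + m + 2 := by
      rw [wt_eq]
      have h := Finset.card_filter_add_card_filter_not
        (s := (Finset.univ : Finset (Fin (m + m + 2))))
        (p := fun i => (GRSextMap (m + 1) b v) f i ≠ 0)
      simp only [not_not, Finset.card_univ, Fintype.card_fin] at h
      convert h using 3
    set R := Finset.univ.filter fun j : Fin (m + m + 1) => f.eval (b j) = 0 with hR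
    have hRcard : #R ≤ f.natDegree := by
      have hsub : (R.image b).val ⊆ f.roots := by
        intro x hx
        rw [Finset.mem_val] at hx
        obtain ⟨j, hj, rfl⟩ := Finset.mem_image.mp hx
        rw [Polynomial.mem_roots hf0]
        exact (Finset.mem_filter.mp hj).2
      have := Polynomial.card_le_degree_of_subset_roots hsub
      rwa [Finset.card_image_of_injective R hb] at this
    have hzsub : (Finset.univ.filter fun i => (GRSextMap (m + 1) b v) f i = 0) ⊆
        insert (Fin.last (m + m + 1)) (R.image Fin.castSucc) := by
      intro i hi
      rw [Finset.mem_filter] at hi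
      rcases Fin.eq_castSucc_or_eq_last i with ⟨j, rfl⟩ | rfl
      · refine Finset.mem_insert_of_mem (Finset.mem_image_of_mem _ ?_)
        rw [Finset.mem_filter]
        refine ⟨Finset.mem_univ _, ?_⟩
        have h := hi.2
        rw [GRSextMap_castSucc] at h
        rcases mul_eq_zero.mp h with h' | h'
        · exact absurd h' (hvne j)
        · exact h'
      · exact Finset.mem_insert_self _ _
    have hzle : #(Finset.univ.filter fun i => (GRSextMap (m + 1) b v) f i = 0) ≤ m := by
      by_cases hcm : f.coeff m = 0
      · have hne : f.natDegree ≠ m := by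
          intro h
          apply Polynomial.leadingCoeff_ne_zero.mpr hf0
          rw [Polynomial.leadingCoeff, h, hcm]
        have hc1 := Finset.card_le_card hzsub
        have hc2 := Finset.card_insert_le (Fin.last (m + m + 1)) (R.image Fin.castSucc)
        have hc3 := Finset.card_image_le (f := Fin.castSucc) (s := R)
        omega
      · have hzsub2 : (Finset.univ.filter fun i => (GRSextMap (m + 1) b v) f i = 0) ⊆
            R.image Fin.castSucc := by
          intro i hi
          rcases Finset.mem_insert.mp (hzsub hi) with h | h
          · exfalso
            rw [Finset.mem_filter, h, GRSextMap_last] at hi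
            exact hcm (by simpa using hi.2)
          · exact h
        have hc1 := Finset.card_le_card hzsub2
        have hc3 := Finset.card_image_le (f := Fin.castSucc) (s := R)
        omega
    omega
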